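/- Let N > 0 and α ∈ ℂ, and define for n ∈ ℕ: p_N(n|α) := (1/(N+1))·(N/(N+1))^n·exp(−|α|²/(N+1))·L_n(−|α|²/(N·(N+1))), where L_n(x) := Σ_{j=0}^n binom(n,j)·(−x)^j/j! is the n-th Laguerre polynomial. Then for every real z with 0 ≤ z < (N+1)/N, the series Σ_{n=0}^∞ p_N(n|α)·z^n converges and equals (1/(N+1−N·z))·exp(−|α|²·(1−z)/(N+1−N·z)). -/

import Mathlib

/-- The `n`-th Laguerre polynomial `L_n(x) = Σ_{j=0}^n binom(n,j)·(−x)^j/j!`. -/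
noncomputable def laguerre (n : ℕ) (x : ℝ) : ℝ :=
  ∑ j ∈ Finset.range (n + 1), (n.choose j : ℝ) * (-x) ^ j / (Nat.factorial j : ℝ)

/-- Photon-number distribution of a displaced thermal state with mean thermal photon
number `N` and displacement `α`. -/
noncomputable def pdisp (N : ℝ) (α : ℂ) (n : ℕ) : ℝ :=
  (1 / (N + 1)) * (N / (N + 1)) ^ n * Real.exp (-(‖α‖) ^ 2 / (N + 1)) *
    laguerre n (-(‖α‖) ^ 2 / (N * (N + 1)))

/-- Laguerre generating function for nonpositive argument. -/
lemma laguerre_gen {t u : ℝ} (ht0 : 0 ≤ t) (ht1 : t < 1) (hu : 0 ≤ u) :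
    HasSum (fun n : ℕ => t ^ n * laguerre n (-u))
      (Real.exp (u * t / (1 - t)) / (1 - t)) := by
  have h1t : (0:ℝ) < 1 - t := by linarith
  have htn : ‖t‖ < 1 := by rwa [Real.norm_eq_abs, abs_of_nonneg ht0]
  set E : ℝ := Real.exp (u * t / (1 - t)) / (1 - t) with hE
  set F : ℕ × ℕ → ℝ := fun p =>
    u ^ p.1 / (Nat.factorial p.1 : ℝ) * ((p.2 + p.1).choose p.1 : ℝ) * t ^ (p.1 + p.2)
    with hF
  set S : ℕ → ℝ := fun j =>
    u ^ j / (Nat.factorial j : ℝ) * t ^ j * (1 / (1 - t) ^ (j + 1)) with hSdef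
  have hFib : ∀ j : ℕ, HasSum (fun m => F (j, m)) (S j) := by
    intro j
    have h := (hasSum_choose_mul_geometric_of_norm_lt_one j htn).mul_left
      (u ^ j / (Nat.factorial j : ℝ) * t ^ j)
    convert h using 2 with m
    · rfl
    simp only [hF, pow_add]
    ring
  have hexp : HasSum (fun j : ℕ => (u * t / (1 - t)) ^ j / (Nat.factorial j : ℝ))
      (Real.exp (u * t / (1 - t))) := by
    have hs := Real.summable_pow_div_factorial (u * t / (1 - t))
    have := hs.hasSum
    rwa [show (∑' n : ℕ, (u * t / (1 - t)) ^ n / (Nat.factorial n : ℝ))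
        = Real.exp (u * t / (1 - t)) by
      rw [Real.exp_eq_exp_ℝ, NormedSpace.exp_eq_tsum_div]] at this
  have hS : HasSum S E := by
    have h := hexp.div_const (1 - t)
    have h2 : (fun j : ℕ => (u * t / (1 - t)) ^ j / (Nat.factorial j : ℝ) / (1 - t)) = S := by
      funext j
      have h1t0 : (1:ℝ) - t ≠ 0 := ne_of_gt h1t
      have hfac : ((Nat.factorial j : ℝ)) ≠ 0 := Nat.cast_ne_zero.mpr j.factorial_ne_zero
      simp only [hSdef, div_pow, mul_pow, pow_succ]
      field_simp
    rwa [h2] at h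
  have hFnn : ∀ p, 0 ≤ F p := by
    intro p
    simp only [hF]
    positivity
  have hFsum : Summable F := by
    refine (summable_prod_of_nonneg hFnn).mpr ⟨fun j => (hFib j).summable, ?_⟩
    have : (fun j => ∑' m, F (j, m)) = S := funext fun j => (hFib j).tsum_eq
    rw [this]
    exact hS.summable
  have hFhas : HasSum F E :=
    ((hFsum.hasSum.prod_fiberwise hFib).unique hS) ▸ hFsum.hasSum
  have hσ : HasSum (F ∘ (Finset.HasAntidiagonal.sigmaAntidiagonalEquivProd (A := ℕ))) E :=
    (Finset.HasAntidiagonal.sigmaAntidiagonalEquivProd (A := ℕ)).hasSum_iff.mpr hFhas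
  refine hσ.sigma fun n => ?_
  have h := hasSum_fintype
    (fun p : (Finset.HasAntidiagonal.antidiagonal n : Finset (ℕ × ℕ)) => F (p : ℕ × ℕ))
  convert h using 1
  · rfl
  rw [Finset.sum_coe_sort (Finset.HasAntidiagonal.antidiagonal n) F,
    Finset.Nat.sum_antidiagonal_eq_sum_range_succ_mk]
  rw [laguerre, Finset.mul_sum]
  refine Finset.sum_congr rfl fun k hk => ?_
  have hkn : k ≤ n := Nat.lt_succ_iff.mp (Finset.mem_range.mp hk)
  simp only [hF, Nat.sub_add_cancel hkn, Nat.add_sub_cancel' hkn, neg_neg]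
  ring

/-- Probability generating function of the displaced thermal photon-number
distribution: for `0 ≤ z < (N+1)/N`, `Σ_n p_N(n|α)·z^n` converges and equals
`(1/(N+1−Nz))·exp(−|α|²(1−z)/(N+1−Nz))`. -/
theorem displaced_thermal_pgf (N : ℝ) (hN : 0 < N) (α : ℂ) (z : ℝ)
    (hz0 : 0 ≤ z) (hz : z < (N + 1) / N) :
    Summable (fun n : ℕ => pdisp N α n * z ^ n) ∧
    ∑' n : ℕ, pdisp N α n * z ^ n =
      (1 / (N + 1 - N * z)) *
        Real.exp (-(‖α‖) ^ 2 * (1 - z) / (N + 1 - N * z)) := by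
  set a : ℝ := (‖α‖) ^ 2 with ha
  have ha0 : 0 ≤ a := sq_nonneg _
  have hN1 : (0:ℝ) < N + 1 := by linarith
  rw [lt_div_iff₀ hN] at hz
  have hD : (0:ℝ) < N + 1 - N * z := by nlinarith
  set t : ℝ := N * z / (N + 1) with htdef
  set u : ℝ := a / (N * (N + 1)) with hudef
  have ht0 : 0 ≤ t := by positivity
  have ht1 : t < 1 := by
    rw [htdef, div_lt_one hN1]
    nlinarith
  have hu0 : 0 ≤ u := by positivity
  have h1t : 1 - t = (N + 1 - N * z) / (N + 1) := by
    rw [htdef]; field_simp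
  have hgen := (laguerre_gen ht0 ht1 hu0).mul_left
    ((1 / (N + 1)) * Real.exp (-a / (N + 1)))
  have hfun : (fun n : ℕ => (1 / (N + 1)) * Real.exp (-a / (N + 1)) *
      (t ^ n * laguerre n (-u))) = fun n : ℕ => pdisp N α n * z ^ n := by
    funext n
    rw [pdisp, ← ha]
    have h1 : -a / (N * (N + 1)) = -u := by rw [hudef]; ring
    have h2 : t ^ n = (N / (N + 1)) ^ n * z ^ n := by
      rw [htdef, ← mul_pow]; ring_nf
    rw [h1, h2]
    ring
  have hval : (1 / (N + 1)) * Real.exp (-a / (N + 1)) *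
      (Real.exp (u * t / (1 - t)) / (1 - t)) =
      (1 / (N + 1 - N * z)) * Real.exp (-a * (1 - z) / (N + 1 - N * z)) := by
    have h1t' : (1:ℝ) - t ≠ 0 := by
      rw [h1t]; positivity
    have hexparg : -a / (N + 1) + u * t / (1 - t) = -a * (1 - z) / (N + 1 - N * z) := by
      rw [h1t, htdef, hudef]
      field_simp
      ring
    have hden : (N + 1) * (1 - t) = N + 1 - N * z := by
      rw [h1t]; field_simp
    calc (1 / (N + 1)) * Real.exp (-a / (N + 1)) *
          (Real.exp (u * t / (1 - t)) / (1 - t))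
        = (1 / ((N + 1) * (1 - t))) *
            Real.exp (-a / (N + 1) + u * t / (1 - t)) := by
          rw [Real.exp_add]
          field_simp
      _ = (1 / (N + 1 - N * z)) * Real.exp (-a * (1 - z) / (N + 1 - N * z)) := by
          rw [hden, hexparg]
  rw [hfun] at hgen
  rw [hval] at hgen
  exact ⟨hgen.summable, hgen.tsum_eq⟩
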